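/- Let (A,⋆) be a semigroup and let M, N be finitely supported moulds on A with N^∅ = 0. Then the mould M∘N is finitely supported, and in the monoid algebra ℂ⟨A⟩ of the free monoid on A one has Σ_{𝐚∈A*} (M∘N)^𝐚·𝐚 = Σ_{𝐛=b_1⋯b_k∈A*} M^𝐛·Φ_N^{b_1}⋯Φ_N^{b_k}, where for b ∈ A the homogeneous component Φ_N^{b} := Σ_{𝐚≠∅, ‖𝐚‖=b} N^𝐚·𝐚 (a finite sum), and the product Φ_N^{b_1}⋯Φ_N^{b_k} is taken in ℂ⟨A⟩ (the empty product, for 𝐛 = ∅, being 1). In other words, mould composition corresponds to substitution of non-commutative generating series. -/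

import Mathlib

/- A mould on an alphabet `A` is a function from words (lists) over `A` to `ℂ`. -/
noncomputable section

abbrev Mould (A : Type*) := List A → ℂ

/-- The unit mould `1^•`: equal to `1` on the empty word and `0` elsewhere. -/
def mone {A : Type*} : Mould A
  | [] => 1
  | _ :: _ => 0

/-- The mould product `(M·N)^𝐚 = Σ_{𝐚¹𝐚²=𝐚} M^{𝐚¹} N^{𝐚²}`. -/
def mprod {A : Type*} (M N : Mould A) : Mould A :=
  fun a => ∑ i ∈ Finset.range (a.length + 1), M (a.take i) * N (a.drop i)

/-- `[M]_{(×n)}`: the `n`-fold mould product of `M` with itself, `[M]_{(×0)} = 1^•`. -/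
def mpow {A : Type*} (M : Mould A) : ℕ → Mould A
  | 0 => mone
  | n + 1 => mprod M (mpow M n)

/-- The mould exponential `Exp M = Σ_{n≥0} [M]_{(×n)}/n!`; on a word `𝐚` the sum is
finite since (for `M^∅ = 0`) the terms with `n > l(𝐚)` vanish. -/
def mExp {A : Type*} (M : Mould A) : Mould A :=
  fun a => ∑ n ∈ Finset.range (a.length + 1), (n.factorial : ℂ)⁻¹ * mpow M n a

/-- The mould logarithm `Log M = Σ_{n≥1} (−1)^{n+1}[M]_{(×n)}/n`; on a word `𝐚` the sum is
finite since (for `M^∅ = 0`) the terms with `n > l(𝐚)` vanish. -/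
def mLog {A : Type*} (M : Mould A) : Mould A :=
  fun a => ∑ n ∈ Finset.Icc 1 a.length, (-1 : ℂ) ^ (n + 1) * (n : ℂ)⁻¹ * mpow M n a
/-- The sum `‖𝐚‖ = a_1 ⋆ ⋯ ⋆ a_r ∈ A` of the letters of a nonempty word
(`none` on the empty word). -/
def blockSum {A : Type*} [Add A] : List A → Option A
  | [] => none
  | x :: t => some (t.foldl (· + ·) x)

/-- Mould composition: `(M∘N)^𝐚 = Σ_k Σ_{𝐚¹⋯𝐚ᵏ=𝐚, 𝐚ⁱ≠∅} M^{‖𝐚¹‖⋯‖𝐚ᵏ‖}·N^{𝐚¹}⋯N^{𝐚ᵏ}`,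
the sum ranging over decompositions of `𝐚` into nonempty consecutive blocks
(in particular `(M∘N)^∅ = M^∅`). -/
def mcomp {A : Type*} [Add A] (M N : Mould A) : Mould A := fun a =>
  ∑ c : Composition a.length,
    M (((a.splitWrtComposition c).map blockSum).reduceOption) *
      ((a.splitWrtComposition c).map N).prod

open scoped BigOperators

/-- The word `𝐚` viewed as an element of the monoid algebra `ℂ⟨A⟩` of the free
monoid on `A`. -/
def word {A : Type*} (a : List A) : MonoidAlgebra ℂ (FreeMonoid A) :=
  MonoidAlgebra.single (FreeMonoid.ofList a) 1

/-- The homogeneous component `Φ_N^b = Σ_{𝐚≠∅, ‖𝐚‖=b} N^𝐚·𝐚` of the generating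
series of `N`. -/
def Phi {A : Type*} [Add A] (N : Mould A) (b : A) : MonoidAlgebra ℂ (FreeMonoid A) :=
  ∑ᶠ (a : List A) (_ : a ≠ [] ∧ blockSum a = some b), N a • word a


section MouldAux

variable {A : Type*}

open Classical in
/-- Lists of words whose entries lie componentwise in the given finsets. -/
noncomputable def tuplesAux (F : A → Finset (List A)) : List A → Finset (List (List A))
  | [] => {([] : List (List A))}
  | x :: b => ((F x) ×ˢ tuplesAux F b).image (fun p => p.1 :: p.2)

lemma mem_tuplesAux {F : A → Finset (List A)} :
    ∀ {b : List A} {L : List (List A)},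
      L ∈ tuplesAux F b ↔ List.Forall₂ (fun a x => a ∈ F x) L b := by
  intro b
  induction b with
  | nil =>
    intro L
    simp [tuplesAux, List.forall₂_nil_right_iff]
  | cons x b ih =>
    intro L
    simp only [tuplesAux, Finset.mem_image, Finset.mem_product, Prod.exists]
    constructor
    · rintro ⟨a, l, ⟨ha, hl⟩, rfl⟩
      exact List.Forall₂.cons ha (ih.1 hl)
    · intro h
      rcases List.forall₂_cons_right_iff.1 h with ⟨a, l, ha, hl, rfl⟩
      exact ⟨a, l, ⟨ha, ih.2 hl⟩, rfl⟩

lemma blockSum_isSome [Add A] {x : List A} (hx : x ≠ []) : ∃ s, blockSum x = some s := by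
  cases x with
  | nil => simp at hx
  | cons y t => exact ⟨_, rfl⟩

lemma forall₂_blockSum [Add A] :
    ∀ {L : List (List A)}, (∀ x ∈ L, x ≠ []) →
      List.Forall₂ (fun a x => blockSum a = some x) L ((L.map blockSum).reduceOption) := by
  intro L
  induction L with
  | nil => intro _; simp
  | cons a L ih =>
    intro h
    obtain ⟨s, hs⟩ := blockSum_isSome (h a (by simp))
    rw [List.map_cons, hs, List.reduceOption_cons_of_some]
    exact List.Forall₂.cons hs (ih fun x hx => h x (by simp [hx]))

lemma reduceOption_eq_of_forall₂ [Add A] {L : List (List A)} {b : List A}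
    (h : List.Forall₂ (fun a x => blockSum a = some x) L b) :
    (L.map blockSum).reduceOption = b := by
  induction h with
  | nil => simp
  | cons ha _ ih => rw [List.map_cons, ha, List.reduceOption_cons_of_some, ih]

lemma forall₂_exists_right {α β : Type*} {R : α → β → Prop} :
    ∀ {L : List α} {b : List β}, List.Forall₂ R L b → ∀ x ∈ L, ∃ y ∈ b, R x y := by
  intro L b h
  induction h with
  | nil => intro x hx; simp at hx
  | cons hr _ ih =>
    intro x hx
    rcases List.mem_cons.1 hx with rfl | hx
    · exact ⟨_, by simp, hr⟩
    · obtain ⟨y, hy, hxy⟩ := ih x hx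
      exact ⟨y, by simp [hy], hxy⟩

lemma forall₂_and_left {α β : Type*} {R : α → β → Prop} {Q : α → Prop} :
    ∀ {L : List α} {b : List β}, List.Forall₂ R L b → (∀ x ∈ L, Q x) →
      List.Forall₂ (fun a y => Q a ∧ R a y) L b := by
  intro L b h
  induction h with
  | nil => intro _; exact List.Forall₂.nil
  | cons hr _ ih =>
    intro hq
    exact List.Forall₂.cons ⟨hq _ (by simp), hr⟩ (ih fun x hx => hq x (by simp [hx]))

lemma word_mul (u v : List A) : word u * word v = word (u ++ v) := by
  simp [word, MonoidAlgebra.single_mul_single, FreeMonoid.ofList_append]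

lemma word_nil : word ([] : List A) = 1 := by
  rw [word, MonoidAlgebra.one_def]
  rfl

end MouldAux

/-- Mould composition corresponds to substitution of non-commutative generating
series: for finitely supported `M, N` with `N^∅ = 0`, the mould `M∘N` is finitely
supported and `Σ_𝐚 (M∘N)^𝐚·𝐚 = Σ_𝐛 M^𝐛·Φ_N^{b_1}⋯Φ_N^{b_k}` in `ℂ⟨A⟩`. -/
theorem mcomp_generating_series {A : Type*} [AddSemigroup A] (M N : Mould A)
    (hM : (Function.support M).Finite) (hN : (Function.support N).Finite)
    (hN0 : N [] = 0) :
    (Function.support (mcomp M N)).Finite ∧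
    ∑ᶠ a : List A, mcomp M N a • word a =
      ∑ᶠ b : List A, M b • (b.map (Phi N)).prod := by
  classical
  set SN : Finset (List A) := hN.toFinset with hSNdef
  set SM : Finset (List A) := hM.toFinset with hSMdef
  set K : ℕ := SM.sup List.length with hKdef
  set F : A → Finset (List A) := fun x => SN.filter (fun a => blockSum a = some x) with hFdef
  have hmemSN : ∀ x : List A, x ∈ SN ↔ N x ≠ 0 := fun x => hN.mem_toFinset
  have hmemSM : ∀ x : List A, x ∈ SM ↔ M x ≠ 0 := fun x => hM.mem_toFinset
  have hFmem : ∀ {a : List A} {x : A}, a ∈ F x → a ∈ SN ∧ blockSum a = some x := by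
    intro a x h
    rw [hFdef] at h
    exact Finset.mem_filter.1 h
  have hWLfin : {L : List (List A) | L.length ≤ K ∧ ∀ x ∈ L, x ∈ SN}.Finite := by
    have h1 : {l : List {x : List A // x ∈ SN} | l.length ≤ K}.Finite :=
      List.finite_length_le _ K
    refine (h1.image (List.map Subtype.val)).subset ?_
    rintro L ⟨hlen, hmem⟩
    refine ⟨L.pmap (fun x h => (⟨x, h⟩ : {x : List A // x ∈ SN})) hmem,
      by simpa using hlen, ?_⟩
    simp [List.map_pmap]
  set WL : Finset (List (List A)) := hWLfin.toFinset with hWLdef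
  set T : List (List A) → MonoidAlgebra ℂ (FreeMonoid A) :=
    fun L => (M ((L.map blockSum).reduceOption) * (L.map N).prod) • word L.flatten with hTdef
  have hMK : ∀ w : List A, K < w.length → M w = 0 := by
    intro w hw
    by_contra h
    exact absurd (Finset.le_sup (f := List.length) ((hmemSM w).2 h)) (not_le.2 hw)
  have hNne : ∀ x : List A, N x ≠ 0 → x ≠ [] := by
    rintro x h rfl; exact h hN0
  have hlenred : ∀ L : List (List A), (∀ x ∈ L, x ≠ []) →
      ((L.map blockSum).reduceOption).length = L.length :=
    fun L h => ((forall₂_blockSum h).length_eq).symm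
  have hTzero : ∀ L : List (List A), L ∉ WL → T L = 0 := by
    intro L hL
    by_cases hall : ∀ x ∈ L, x ∈ SN
    · have hlen : K < L.length := by
        by_contra h
        exact hL (hWLfin.mem_toFinset.2 ⟨le_of_not_gt h, hall⟩)
      have hne : ∀ x ∈ L, x ≠ [] := fun x hx => hNne x ((hmemSN x).1 (hall x hx))
      have h0 : M ((L.map blockSum).reduceOption) = 0 := by
        apply hMK
        rw [hlenred L hne]
        exact hlen
      simp [hTdef, h0]
    · push_neg at hall
      obtain ⟨x, hxL, hx⟩ := hall
      have hx0 : N x = 0 := by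
        by_contra h; exact hx ((hmemSN x).2 h)
      have h0 : (L.map N).prod = 0 :=
        List.prod_eq_zero (hx0 ▸ List.mem_map_of_mem (f := N) hxL)
      simp [hTdef, h0]
  set J : Finset (List A) := WL.image List.flatten with hJdef
  have hsuppc : Function.support (mcomp M N) ⊆ ↑J := by
    intro a ha
    rw [Function.mem_support] at ha
    simp only [mcomp] at ha
    obtain ⟨c, -, hc⟩ := Finset.exists_ne_zero_of_sum_ne_zero ha
    have hMne : M (((a.splitWrtComposition c).map blockSum).reduceOption) ≠ 0 :=
      left_ne_zero_of_mul hc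
    have hPne : ((a.splitWrtComposition c).map N).prod ≠ 0 := right_ne_zero_of_mul hc
    have hall : ∀ x ∈ a.splitWrtComposition c, x ∈ SN := by
      intro x hx
      refine (hmemSN x).2 fun h0 => ?_
      exact hPne (List.prod_eq_zero (h0 ▸ List.mem_map_of_mem (f := N) hx))
    have hne : ∀ x ∈ a.splitWrtComposition c, x ≠ [] :=
      fun x hx => hNne x ((hmemSN x).1 (hall x hx))
    have hlen : (a.splitWrtComposition c).length ≤ K := by
      have h1 := Finset.le_sup (f := List.length) ((hmemSM _).2 hMne)
      rwa [hlenred _ hne] at h1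
    refine Finset.mem_coe.2 (Finset.mem_image.2 ⟨a.splitWrtComposition c,
      hWLfin.mem_toFinset.2 ⟨hlen, hall⟩, ?_⟩)
    rw [List.flatten_splitWrtComposition]
  refine ⟨(J.finite_toSet).subset hsuppc, ?_⟩
  have hsuppL : Function.support (fun a : List A => mcomp M N a • word a) ⊆ ↑J := by
    intro a ha
    apply hsuppc
    rw [Function.mem_support] at ha ⊢
    intro h; exact ha (by rw [h, zero_smul])
  have hsuppR : Function.support (fun b : List A => M b • (b.map (Phi N)).prod) ⊆ ↑SM := by
    intro b hb
    rw [Function.mem_support] at hb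
    refine Finset.mem_coe.2 ((hmemSM b).2 fun h => hb ?_)
    rw [h, zero_smul]
  rw [finsum_eq_sum_of_support_subset _ hsuppL, finsum_eq_sum_of_support_subset _ hsuppR]
  -- LHS: sum over all lists of blocks
  have hsplit : ∀ a ∈ J, mcomp M N a • word a =
      ∑ c : Composition a.length, T (a.splitWrtComposition c) := by
    intro a _
    simp only [mcomp]
    rw [Finset.sum_smul]
    refine Finset.sum_congr rfl fun c _ => ?_
    simp only [hTdef, List.flatten_splitWrtComposition]
  have hinj : ∀ p ∈ J.sigma (fun a => (Finset.univ : Finset (Composition a.length))),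
      ∀ q ∈ J.sigma (fun a => (Finset.univ : Finset (Composition a.length))),
      p.1.splitWrtComposition p.2 = q.1.splitWrtComposition q.2 → p = q := by
    rintro ⟨a, c⟩ - ⟨a', c'⟩ - h
    dsimp at h
    have ha : a = a' := by
      rw [← List.flatten_splitWrtComposition a c, h, List.flatten_splitWrtComposition]
    subst ha
    have hc : c = c' := by
      apply Composition.ext
      rw [← List.map_length_splitWrtComposition a c, h, List.map_length_splitWrtComposition]
    rw [hc]
  have hLHS : ∑ a ∈ J, mcomp M N a • word a = ∑ L ∈ WL, T L := by
    rw [Finset.sum_congr rfl hsplit,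
      Finset.sum_sigma' J (fun a => (Finset.univ : Finset (Composition a.length)))
        (fun a c => T (a.splitWrtComposition c)),
      ← Finset.sum_image hinj]
    have hsub : WL ⊆ (J.sigma (fun a => (Finset.univ : Finset (Composition a.length)))).image
        (fun p => p.1.splitWrtComposition p.2) := by
      intro L hL
      obtain ⟨hlen, hall⟩ := hWLfin.mem_toFinset.1 hL
      have hne : ∀ x ∈ L, x ≠ [] := fun x hx => hNne x ((hmemSN x).1 (hall x hx))
      have hpos : ∀ i ∈ L.map List.length, 0 < i := by
        intro i hi
        obtain ⟨x, hx, rfl⟩ := List.mem_map.1 hi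
        exact List.length_pos_iff.2 (hne x hx)
      refine Finset.mem_image.2
        ⟨⟨L.flatten, ⟨L.map List.length, fun hi => hpos _ hi, List.length_flatten.symm⟩⟩, ?_, ?_⟩
      · exact Finset.mem_sigma.2 ⟨Finset.mem_image_of_mem _ hL, Finset.mem_univ _⟩
      · exact List.splitWrtComposition_flatten L _ rfl
    exact (Finset.sum_subset hsub fun L _ hL => hTzero L hL).symm
  -- RHS: expand the product of the Phi's
  have hPhi : ∀ x : A, Phi N x = ∑ a ∈ F x, N a • word a := by
    intro x
    rw [Phi]
    apply finsum_cond_eq_sum_of_cond_iff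
    intro a ha
    have hNa : N a ≠ 0 := fun h => ha (by rw [h, zero_smul])
    rw [hFdef]
    simp only [Finset.mem_filter, hmemSN]
    exact ⟨fun h => ⟨hNa, h.2⟩, fun h => ⟨hNne a hNa, h.2⟩⟩
  have hProd : ∀ b : List A, (b.map (Phi N)).prod =
      ∑ L ∈ tuplesAux F b, (L.map N).prod • word L.flatten := by
    intro b
    induction b with
    | nil => simp [tuplesAux, word_nil]
    | cons x b ih =>
      rw [List.map_cons, List.prod_cons, ih, hPhi x, Finset.sum_mul_sum,
        show tuplesAux F (x :: b) = ((F x) ×ˢ tuplesAux F b).image (fun p => p.1 :: p.2)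
          from rfl,
        Finset.sum_image (by
          rintro ⟨a, l⟩ - ⟨a', l'⟩ - h
          simp only [List.cons.injEq] at h
          exact Prod.ext h.1 h.2),
        Finset.sum_product]
      refine Finset.sum_congr rfl fun a _ => Finset.sum_congr rfl fun L _ => ?_
      rw [smul_mul_assoc, mul_smul_comm, smul_smul, word_mul, List.map_cons, List.prod_cons,
        List.flatten_cons]
  have hRHSstep : ∀ b ∈ SM, M b • (b.map (Phi N)).prod = ∑ L ∈ tuplesAux F b, T L := by
    intro b hb
    rw [hProd b, Finset.smul_sum]
    refine Finset.sum_congr rfl fun L hL => ?_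
    have hf : List.Forall₂ (fun a x => blockSum a = some x) L b :=
      (mem_tuplesAux.1 hL).imp fun _ _ h => (hFmem h).2
    have hred : (L.map blockSum).reduceOption = b := reduceOption_eq_of_forall₂ hf
    simp only [hTdef, hred, smul_smul]
  have hinj2 : ∀ p ∈ SM.sigma (fun b => tuplesAux F b),
      ∀ q ∈ SM.sigma (fun b => tuplesAux F b),
      p.2 = q.2 → p = q := by
    rintro ⟨b, L⟩ hp ⟨b', L'⟩ hq h
    dsimp at h
    subst h
    have h1 : (L.map blockSum).reduceOption = b :=
      reduceOption_eq_of_forall₂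
        (((mem_tuplesAux.1 (Finset.mem_sigma.1 hp).2)).imp fun _ _ h => (hFmem h).2)
    have h2 : (L.map blockSum).reduceOption = b' :=
      reduceOption_eq_of_forall₂
        (((mem_tuplesAux.1 (Finset.mem_sigma.1 hq).2)).imp fun _ _ h => (hFmem h).2)
    have hb : b = b' := by rw [← h1, h2]
    subst hb
    rfl
  have hRHS : ∑ b ∈ SM, ∑ L ∈ tuplesAux F b, T L = ∑ L ∈ WL, T L := by
    rw [Finset.sum_sigma' SM (fun b => tuplesAux F b) (fun _ L => T L),
      ← Finset.sum_image hinj2]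
    have hsub2 : (SM.sigma (fun b => tuplesAux F b)).image (fun p => p.2) ⊆ WL := by
      intro L hL
      obtain ⟨⟨b, L'⟩, hp, rfl⟩ := Finset.mem_image.1 hL
      obtain ⟨hbSM, hLt⟩ := Finset.mem_sigma.1 hp
      have hf := mem_tuplesAux.1 hLt
      refine hWLfin.mem_toFinset.2 ⟨?_, ?_⟩
      · rw [hf.length_eq]
        exact Finset.le_sup (f := List.length) hbSM
      · intro x hx
        obtain ⟨y, -, hy⟩ := forall₂_exists_right hf x hx
        exact (hFmem hy).1
    refine Finset.sum_subset hsub2 ?_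
    intro L hLWL hLim
    by_cases hMb : M ((L.map blockSum).reduceOption) = 0
    · simp [hTdef, hMb]
    · exfalso
      apply hLim
      obtain ⟨hlen, hall⟩ := hWLfin.mem_toFinset.1 hLWL
      have hne : ∀ x ∈ L, x ≠ [] := fun x hx => hNne x ((hmemSN x).1 (hall x hx))
      have hf := forall₂_blockSum hne
      have hLt : L ∈ tuplesAux F ((L.map blockSum).reduceOption) := by
        apply mem_tuplesAux.2
        refine (forall₂_and_left hf hall).imp fun _ _ h => ?_
        rw [hFdef]
        exact Finset.mem_filter.2 ⟨h.1, h.2⟩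
      exact Finset.mem_image.2 ⟨⟨(L.map blockSum).reduceOption, L⟩,
        Finset.mem_sigma.2 ⟨(hmemSM _).2 hMb, hLt⟩, rfl⟩
  rw [hLHS, ← hRHS]
  exact Finset.sum_congr rfl fun b hb => (hRHSstep b hb).symm


end
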